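/- arXiv:2306.01758 — 2 statements merged into one kernel-verified Lean document; each statement's English description precedes it below -/
import Mathlib

section
/- Let Ω be a measurable space, μ a σ-finite measure on Ω, and f₁, f₂, g₁, g₂ ∈ L²(μ). If the complex measures f₁|f₁|dμ = g₁|g₁|dμ and f₂|f₂|dμ = g₂|g₂|dμ agree, then the complex measures (f₁+f₂)|f₁+f₂|dμ and (g₁+g₂)|g₁+g₂|dμ agree. -/
open MeasureTheory

/-- The complex measure `f|f| dμ`. -/
noncomputable def sqDen {Ω : Type*} [MeasurableSpace Ω] (μ : Measure Ω) (f : Ω → ℂ) :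
    ComplexMeasure Ω :=
  μ.withDensityᵥ (fun x => f x * (‖f x‖ : ℂ))

lemma mul_abs_inj {z w : ℂ} (h : z * (‖z‖ : ℂ) = w * (‖w‖ : ℂ)) : z = w := by
  have habs : ‖z‖ = ‖w‖ := by
    have := congrArg norm h
    simp only [norm_mul, Complex.norm_real, Real.norm_eq_abs, abs_of_nonneg (norm_nonneg _)] at this
    nlinarith [norm_nonneg z, norm_nonneg w, sq_nonneg (‖z‖ - ‖w‖)]
  rcases eq_or_ne ‖z‖ 0 with h0 | h0
  · have hz : z = 0 := by simpa using norm_eq_zero.mp h0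
    have hw : w = 0 := by
      rw [habs] at h0; simpa using norm_eq_zero.mp h0
    rw [hz, hw]
  · rw [habs] at h
    exact mul_right_cancel₀ (by exact_mod_cast fun hc => h0 (by rw [habs]; exact_mod_cast hc)) h

lemma sqDen_integrable {Ω : Type*} [MeasurableSpace Ω] {μ : Measure Ω} {f : Ω → ℂ}
    (hf : MemLp f 2 μ) : Integrable (fun x => f x * (‖f x‖ : ℂ)) μ := by
  have habs : MemLp (fun x => (‖f x‖ : ℂ)) 2 μ := by
    exact hf.norm.ofReal (K := ℂ)
  have : MemLp (fun x => f x • (‖f x‖ : ℂ)) 1 μ := by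
    refine MemLp.smul (hpqr := ?_) habs hf
    simp [ENNReal.holderTriple_iff, one_div, ENNReal.inv_two_add_inv_two]
  rw [memLp_one_iff_integrable] at this
  simpa [smul_eq_mul, mul_comm] using this

lemma sqDen_ae_eq {Ω : Type*} [MeasurableSpace Ω] {μ : Measure Ω} {f g : Ω → ℂ}
    (hf : MemLp f 2 μ) (hg : MemLp g 2 μ) (h : sqDen μ f = sqDen μ g) : f =ᵐ[μ] g := by
  have := Integrable.ae_eq_of_withDensityᵥ_eq (sqDen_integrable hf) (sqDen_integrable hg) h
  filter_upwards [this] with x hx using mul_abs_inj hx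

/-- if f₁|f₁|dμ = g₁|g₁|dμ and f₂|f₂|dμ = g₂|g₂|dμ then
(f₁+f₂)|f₁+f₂|dμ = (g₁+g₂)|g₁+g₂|dμ. -/
theorem sqDen_add_well_defined {Ω : Type*} [MeasurableSpace Ω]
    (μ : Measure Ω) (hμ : SigmaFinite μ) (f₁ f₂ g₁ g₂ : Ω → ℂ)
    (hf₁ : MemLp f₁ 2 μ) (hf₂ : MemLp f₂ 2 μ) (hg₁ : MemLp g₁ 2 μ) (hg₂ : MemLp g₂ 2 μ)
    (h₁ : sqDen μ f₁ = sqDen μ g₁) (h₂ : sqDen μ f₂ = sqDen μ g₂) :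
    sqDen μ (f₁ + f₂) = sqDen μ (g₁ + g₂) := by
  have e₁ := sqDen_ae_eq hf₁ hg₁ h₁
  have e₂ := sqDen_ae_eq hf₂ hg₂ h₂
  apply WithDensityᵥEq.congr_ae
  filter_upwards [e₁, e₂] with x hx₁ hx₂
  simp [Pi.add_apply, hx₁, hx₂]
end

section
/- For every Cauchy sequence (u_n) of complex measures on a measurable space Ω with respect to the CM(Ω) norm, there exists a finite measure ν and a sequence (f_n) in L²(ν) with u_n = f_n|f_n|dν for all n, and the sequence (f_n) is Cauchy in L²(ν); consequently (u_n) converges in CM(Ω) to g|g|dν where g is the L²(ν)-limit of (f_n). -/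
open MeasureTheory Complex Filter Topology

structure CMSpace (Ω : Type*) [MeasurableSpace Ω] where
  add : ComplexMeasure Ω → ComplexMeasure Ω → ComplexMeasure Ω
  smul : ℂ → ComplexMeasure Ω → ComplexMeasure Ω
  inner : ComplexMeasure Ω → ComplexMeasure Ω → ℂ
  add_repr : ∀ (μ : Measure Ω), SigmaFinite μ → ∀ f g : Ω → ℂ,
      MemLp f 2 μ → MemLp g 2 μ →
      add (sqDen μ f) (sqDen μ g) = sqDen μ (f + g)
  smul_repr : ∀ (μ : Measure Ω), SigmaFinite μ → ∀ (c : ℂ) (f : Ω → ℂ),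
      MemLp f 2 μ → smul c (sqDen μ f) = sqDen μ (c • f)
  inner_repr : ∀ (μ : Measure Ω), SigmaFinite μ → ∀ f g : Ω → ℂ,
      MemLp f 2 μ → MemLp g 2 μ →
      inner (sqDen μ f) (sqDen μ g) = ∫ x, f x * (starRingEnd ℂ) (g x) ∂μ
  add_assoc : ∀ u v w, add (add u v) w = add u (add v w)
  add_comm : ∀ u v, add u v = add v u
  add_zero : ∀ u, add u 0 = u
  neg_add : ∀ u, add (smul (-1) u) u = 0
  one_smul : ∀ u, smul 1 u = u
  mul_smul : ∀ c d u, smul (c * d) u = smul c (smul d u)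
  smul_add : ∀ c u v, smul c (add u v) = add (smul c u) (smul c v)
  add_smul : ∀ c d u, smul (c + d) u = add (smul c u) (smul d u)
  inner_conj_symm : ∀ u v, (starRingEnd ℂ) (inner u v) = inner v u
  inner_add_left : ∀ u v w, inner (add u v) w = inner u w + inner v w
  inner_smul_left : ∀ c u v, inner (smul c u) v = (starRingEnd ℂ) c * inner u v
  inner_self_nonneg : ∀ u, 0 ≤ (inner u u).re ∧ (inner u u).im = 0
  inner_self_eq_zero : ∀ u, inner u u = 0 → u = 0
  complete : ∀ u : ℕ → ComplexMeasure Ω,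
    (∀ ε > 0, ∃ N, ∀ m ≥ N, ∀ n ≥ N,
      Real.sqrt (inner (add (u m) (smul (-1) (u n))) (add (u m) (smul (-1) (u n)))).re < ε) →
    ∃ v, Tendsto
      (fun n => Real.sqrt (inner (add (u n) (smul (-1) v)) (add (u n) (smul (-1) v))).re)
      atTop (nhds 0)

noncomputable def CMSpace.nrm {Ω : Type*} [MeasurableSpace Ω] (C : CMSpace Ω)
    (u : ComplexMeasure Ω) : ℝ := Real.sqrt (C.inner u u).re

noncomputable def CMSpace.sub {Ω : Type*} [MeasurableSpace Ω] (C : CMSpace Ω)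
    (u v : ComplexMeasure Ω) : ComplexMeasure Ω := C.add u (C.smul (-1) v)





lemma cm_withDensity_rnDeriv {Ω : Type*} [MeasurableSpace Ω]
    (c : ComplexMeasure Ω) (ν : Measure Ω) [SigmaFinite ν]
    (h : c ≪ᵥ ν.toENNRealVectorMeasure) :
    ν.withDensityᵥ (c.rnDeriv ν) = c := by
  have hre : c.re ≪ᵥ ν.toENNRealVectorMeasure := fun s hs => by
    have h0 := h hs
    show (c s).re = 0
    simp [h0]
  have him : c.im ≪ᵥ ν.toENNRealVectorMeasure := fun s hs => by
    have h0 := h hs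
    show (c s).im = 0
    simp [h0]
  have h1 := SignedMeasure.withDensityᵥ_rnDeriv_eq c.re ν hre
  have h2 := SignedMeasure.withDensityᵥ_rnDeriv_eq c.im ν him
  ext i hi
  rw [withDensityᵥ_apply (c.integrable_rnDeriv ν) hi]
  apply Complex.ext
  · rw [← RCLike.re_eq_complex_re, ← integral_re (c.integrable_rnDeriv ν).integrableOn,
      RCLike.re_eq_complex_re]
    have hr : (fun x => (c.rnDeriv ν x).re) = c.re.rnDeriv ν := rfl
    calc ∫ x in i, (c.rnDeriv ν x).re ∂ν
        = (ν.withDensityᵥ (c.re.rnDeriv ν)) i := by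
          rw [withDensityᵥ_apply (SignedMeasure.integrable_rnDeriv _ _) hi, hr]
      _ = (c i).re := by rw [h1]; rfl
  · rw [← RCLike.im_eq_complex_im, ← integral_im (c.integrable_rnDeriv ν).integrableOn,
      RCLike.im_eq_complex_im]
    have hr : (fun x => (c.rnDeriv ν x).im) = c.im.rnDeriv ν := rfl
    calc ∫ x in i, (c.rnDeriv ν x).im ∂ν
        = (ν.withDensityᵥ (c.im.rnDeriv ν)) i := by
          rw [withDensityᵥ_apply (SignedMeasure.integrable_rnDeriv _ _) hi, hr]
      _ = (c i).im := by rw [h2]; rfl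

lemma exists_sqrt_density {Ω : Type*} [MeasurableSpace Ω]
    (c : ComplexMeasure Ω) (ν : Measure Ω) [SigmaFinite ν]
    (h : c ≪ᵥ ν.toENNRealVectorMeasure) :
    ∃ f : Ω → ℂ, MemLp f 2 ν ∧ sqDen ν f = c := by
  set h0 := c.rnDeriv ν with hh0
  have hmeas : Measurable h0 := by
    have : h0 = fun x => (c.re.rnDeriv ν x : ℂ) + (c.im.rnDeriv ν x : ℂ) * Complex.I := by
      funext x; exact (Complex.mk_eq_add_mul_I _ _)
    rw [this]
    exact (Complex.measurable_ofReal.comp (SignedMeasure.measurable_rnDeriv _ _)).add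
      ((Complex.measurable_ofReal.comp (SignedMeasure.measurable_rnDeriv _ _)).mul_const _)
  have hint : Integrable h0 ν := c.integrable_rnDeriv ν
  set f : Ω → ℂ := fun x => (↑(Real.sqrt (‖h0 x‖)) : ℂ)⁻¹ * h0 x with hf
  have habs : ∀ x, ‖f x‖ = Real.sqrt (‖h0 x‖) := by
    intro x
    by_cases hx : h0 x = 0
    · simp [hf, hx]
    · have hpos : (0:ℝ) < ‖h0 x‖ := norm_pos_iff.mpr hx
      have hsq : Real.sqrt (‖h0 x‖) * Real.sqrt (‖h0 x‖)
          = ‖h0 x‖ := Real.mul_self_sqrt hpos.le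
      have hs0 : Real.sqrt (‖h0 x‖) ≠ 0 := (Real.sqrt_pos.mpr hpos).ne'
      simp only [hf, norm_mul, norm_inv, Complex.norm_real, Real.norm_eq_abs,
        _root_.abs_of_nonneg (Real.sqrt_nonneg _)]
      field_simp
      rw [Real.sq_sqrt hpos.le]
  have key : ∀ x, f x * (‖f x‖ : ℂ) = h0 x := by
    intro x
    by_cases hx : h0 x = 0
    · simp [hf, hx]
    · have hpos : (0:ℝ) < ‖h0 x‖ := norm_pos_iff.mpr hx
      have hs0 : Real.sqrt (‖h0 x‖) ≠ 0 := (Real.sqrt_pos.mpr hpos).ne'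
      have hs0' : (↑(Real.sqrt (‖h0 x‖)) : ℂ) ≠ 0 := by
        exact_mod_cast hs0
      rw [habs x, hf]
      field_simp
  have hfmeas : Measurable f := by
    apply Measurable.mul _ hmeas
    apply Measurable.inv
    exact Complex.measurable_ofReal.comp
      ((Real.continuous_sqrt.measurable).comp (continuous_norm.measurable.comp hmeas))
  have hmem : MemLp f 2 ν := by
    rw [memLp_two_iff_integrable_sq_norm hfmeas.aestronglyMeasurable]
    have : (fun x => ‖f x‖ ^ 2) = fun x => ‖h0 x‖ := by
      funext x
      rw [habs x, sq,
        Real.mul_self_sqrt (norm_nonneg _)]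
    rw [this]
    exact hint.norm
  refine ⟨f, hmem, ?_⟩
  have : (fun x => f x * (‖f x‖ : ℂ)) = h0 := funext key
  rw [sqDen, this, hh0]
  exact cm_withDensity_rnDeriv c ν h

lemma sub_repr {Ω : Type*} [MeasurableSpace Ω] (C : CMSpace Ω) (ν : Measure Ω)
    [SigmaFinite ν] (f g : Ω → ℂ) (hf : MemLp f 2 ν) (hg : MemLp g 2 ν) :
    C.sub (sqDen ν f) (sqDen ν g) = sqDen ν (f - g) := by
  rw [CMSpace.sub, C.smul_repr ν ‹_› (-1) g hg,
    C.add_repr ν ‹_› f ((-1 : ℂ) • g) hf (hg.const_smul _)]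
  congr 1
  funext x
  simp [sub_eq_add_neg]

lemma nrm_sqDen_eq {Ω : Type*} [MeasurableSpace Ω] (C : CMSpace Ω) (ν : Measure Ω)
    [SigmaFinite ν] (d : Ω → ℂ) (hd : MemLp d 2 ν) :
    C.nrm (sqDen ν d) = (eLpNorm d 2 ν).toReal := by
  rw [CMSpace.nrm, C.inner_repr ν ‹_› d d hd hd]
  set D : Lp ℂ 2 ν := hd.toLp d with hD
  have h1 : ∫ x, d x * (starRingEnd ℂ) (d x) ∂ν = @inner ℂ _ _ D D := by
    rw [MeasureTheory.L2.inner_def]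
    refine integral_congr_ae ?_
    filter_upwards [hd.coeFn_toLp] with x hx
    simp [hD, hx, RCLike.inner_apply, mul_comm]
    exact Complex.mul_conj' (d x)
  rw [h1]
  have h2 : ‖D‖ = Real.sqrt (RCLike.re (@inner ℂ _ _ D D)) := norm_eq_sqrt_re_inner D
  rw [← Lp.norm_toLp d hd, ← hD, h2]
  norm_num [RCLike.re_eq_complex_re]

/-- every CM-Cauchy sequence of complex measures can be represented by a
Cauchy sequence of square-root densities in L²(ν) for a common finite measure ν, and it
converges in CM(Ω) to g|g|dν where g is the L²(ν)-limit. -/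
theorem cauchy_CM_representation {Ω : Type*} [MeasurableSpace Ω] (C : CMSpace Ω)
    (u : ℕ → ComplexMeasure Ω)
    (hCauchy : ∀ ε > (0 : ℝ), ∃ N, ∀ m ≥ N, ∀ n ≥ N, C.nrm (C.sub (u m) (u n)) < ε) :
    ∃ ν : Measure Ω, IsFiniteMeasure ν ∧ ∃ f : ℕ → Ω → ℂ,
      (∀ n, MemLp (f n) 2 ν) ∧ (∀ n, u n = sqDen ν (f n)) ∧
      (∀ ε > (0 : ℝ), ∃ N, ∀ m ≥ N, ∀ n ≥ N,
        eLpNorm (f m - f n) 2 ν < ENNReal.ofReal ε) ∧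
      ∃ g : Ω → ℂ, MemLp g 2 ν ∧
        Filter.Tendsto (fun n => eLpNorm (f n - g) 2 ν) Filter.atTop (nhds 0) ∧
        Filter.Tendsto (fun n => C.nrm (C.sub (u n) (sqDen ν g))) Filter.atTop (nhds 0) := by
  classical
  set μs : ℕ → Measure Ω := fun n =>
    (ComplexMeasure.re (u n)).totalVariation + (ComplexMeasure.im (u n)).totalVariation with hμs
  have hfin : ∀ n, IsFiniteMeasure (μs n) := by
    intro n
    have h1 : IsFiniteMeasure (ComplexMeasure.re (u n)).totalVariation := by
      unfold SignedMeasure.totalVariation; infer_instance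
    have h2 : IsFiniteMeasure (ComplexMeasure.im (u n)).totalVariation := by
      unfold SignedMeasure.totalVariation; infer_instance
    exact MeasureTheory.isFiniteMeasureAdd
  set cns : ℕ → ENNReal := fun n => (μs n Set.univ + 1)⁻¹ * (2:ENNReal)⁻¹ ^ n with hcns
  have hcns_ne : ∀ n, cns n ≠ 0 := by
    intro n
    haveI := hfin n
    apply mul_ne_zero
    · rw [ENNReal.inv_ne_zero]
      exact ENNReal.add_ne_top.mpr ⟨measure_ne_top _ _, ENNReal.one_ne_top⟩
    · exact pow_ne_zero _ (by simp)
  set ν : Measure Ω := Measure.sum (fun n => cns n • μs n) with hν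
  haveI hνfin : IsFiniteMeasure ν := by
    constructor
    rw [hν, Measure.sum_apply _ MeasurableSet.univ]
    have hle : ∀ n, (cns n • μs n) Set.univ ≤ (2:ENNReal)⁻¹ ^ n := by
      intro n
      haveI := hfin n
      rw [Measure.smul_apply, smul_eq_mul, hcns]
      have hne : μs n Set.univ + 1 ≠ ⊤ :=
        ENNReal.add_ne_top.mpr ⟨measure_ne_top _ _, ENNReal.one_ne_top⟩
      calc (μs n Set.univ + 1)⁻¹ * (2:ENNReal)⁻¹ ^ n * μs n Set.univ
          = (2:ENNReal)⁻¹ ^ n * ((μs n Set.univ + 1)⁻¹ * μs n Set.univ) := by ring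
        _ ≤ (2:ENNReal)⁻¹ ^ n * ((μs n Set.univ + 1)⁻¹ * (μs n Set.univ + 1)) := by
            gcongr
            exact le_self_add
        _ = (2:ENNReal)⁻¹ ^ n * 1 := by
            rw [ENNReal.inv_mul_cancel (by simp) hne]
        _ = (2:ENNReal)⁻¹ ^ n := mul_one _
    calc (∑' n, (cns n • μs n) Set.univ) ≤ ∑' n : ℕ, (2:ENNReal)⁻¹ ^ n :=
          ENNReal.tsum_le_tsum hle
      _ = (1 - (2:ENNReal)⁻¹)⁻¹ := ENNReal.tsum_geometric _
      _ < ⊤ := by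
          rw [ENNReal.inv_lt_top, ENNReal.one_sub_inv_two]
          simp
  haveI : SigmaFinite ν := inferInstance
  have hac : ∀ n, (u n) ≪ᵥ ν.toENNRealVectorMeasure := by
    intro n
    refine VectorMeasure.AbsolutelyContinuous.mk fun s hs h0 => ?_
    rw [Measure.toENNRealVectorMeasure_apply_measurable hs] at h0
    rw [hν, Measure.sum_apply _ hs] at h0
    have hterm : (cns n • μs n) s = 0 := by
      have := ENNReal.tsum_eq_zero.mp h0 n
      exact this
    rw [Measure.smul_apply, smul_eq_mul] at hterm
    have hμns : μs n s = 0 := by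
      rcases mul_eq_zero.mp hterm with h | h
      · exact absurd h (hcns_ne n)
      · exact h
    rw [hμs] at hμns
    simp only [Measure.add_apply, add_eq_zero] at hμns
    have hre := SignedMeasure.null_of_totalVariation_zero _ hμns.1
    have him := SignedMeasure.null_of_totalVariation_zero _ hμns.2
    apply Complex.ext
    · exact hre
    · exact him
  choose f hmem hfrepr using fun n => exists_sqrt_density (u n) ν (hac n)
  have hrepr : ∀ n, u n = sqDen ν (f n) := fun n => (hfrepr n).symm
  have hkey : ∀ m n, C.nrm (C.sub (u m) (u n)) = (eLpNorm (f m - f n) 2 ν).toReal := by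
    intro m n
    rw [hrepr m, hrepr n, sub_repr C ν _ _ (hmem m) (hmem n),
      nrm_sqDen_eq C ν _ ((hmem m).sub (hmem n))]
  have hC2 : ∀ ε > (0:ℝ), ∃ N, ∀ m ≥ N, ∀ n ≥ N,
      eLpNorm (f m - f n) 2 ν < ENNReal.ofReal ε := by
    intro ε hε
    obtain ⟨N, hN⟩ := hCauchy ε hε
    refine ⟨N, fun m hm n hn => ?_⟩
    rw [ENNReal.lt_ofReal_iff_toReal_lt (((hmem m).sub (hmem n)).eLpNorm_ne_top)]
    rw [← hkey m n]
    exact hN m hm n hn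
  set F : ℕ → Lp ℂ 2 ν := fun n => (hmem n).toLp (f n) with hF
  have hFcauchy : CauchySeq F := by
    rw [EMetric.cauchySeq_iff]
    intro ε hε
    obtain ⟨δ, hδ0, hδ⟩ : ∃ δ : ℝ, 0 < δ ∧ ENNReal.ofReal δ ≤ ε := by
      rcases eq_or_ne ε ⊤ with h | h
      · exact ⟨1, one_pos, by simp [h]⟩
      · exact ⟨ε.toReal, ENNReal.toReal_pos hε.ne' h, by rw [ENNReal.ofReal_toReal h]⟩
    obtain ⟨N, hN⟩ := hC2 δ hδ0
    refine ⟨N, fun m hm n hn => ?_⟩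
    calc edist (F m) (F n) = eLpNorm (f m - f n) 2 ν :=
          Lp.edist_toLp_toLp _ _ _ _
      _ < ENNReal.ofReal δ := hN m hm n hn
      _ ≤ ε := hδ
  obtain ⟨G, hG⟩ := cauchySeq_tendsto_of_complete hFcauchy
  have hGmem : MemLp (⇑G) 2 ν := Lp.memLp G
  have hFG : ∀ n, eLpNorm (f n - ⇑G) 2 ν = edist (F n) G := by
    intro n
    conv_rhs => rw [← Lp.toLp_coeFn G hGmem]
    exact (Lp.edist_toLp_toLp (f n) (⇑G) (hmem n) hGmem).symm
  refine ⟨ν, hνfin, f, hmem, hrepr, hC2, ⇑G, hGmem, ?_, ?_⟩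
  · have h1 : Tendsto (fun n => edist (F n) G) atTop (nhds 0) := by
      rw [ENNReal.tendsto_nhds_zero]
      intro ε hε
      obtain ⟨N, hN⟩ := (EMetric.tendsto_atTop.mp hG) ε hε
      exact Filter.eventually_atTop.mpr ⟨N, fun n hn => (hN n hn).le⟩
    simpa only [hFG] using h1
  · have h2 : (fun n => C.nrm (C.sub (u n) (sqDen ν ⇑G))) = fun n => dist (F n) G := by
      funext n
      rw [hrepr n, sub_repr C ν _ _ (hmem n) hGmem,
        nrm_sqDen_eq C ν _ ((hmem n).sub hGmem), dist_edist, hFG n]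
    rw [h2]
    exact tendsto_iff_dist_tendsto_zero.mp hG
end
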